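/- Let A be a symmetric matrix over a field with zero diagonal indexed by a finite set V with |V| ≥ 2. If det(A) = 0, then the rank of A equals the maximum over v ∈ V of the rank of the principal submatrix A_{V∖{v}} obtained by deleting row and column v. -/

import Mathlib

open Submodule Set Matrix

lemma aux_rank_submatrix_row_le {m V n K : Type*} [Fintype V] [Fintype n] [Fintype m]
    [Field K] (A : Matrix V n K) (f : m → V) :
    (A.submatrix f id).rank ≤ A.rank := by
  rw [Matrix.rank_eq_finrank_span_row, Matrix.rank_eq_finrank_span_row]
  apply Submodule.finrank_mono
  apply Submodule.span_mono
  rintro x ⟨i, rfl⟩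
  exact ⟨f i, rfl⟩

lemma aux_rank_submatrix_col_le {m V n K : Type*} [Fintype V] [Fintype n] [Fintype m]
    [Field K] (A : Matrix n V K) (f : m → V) :
    (A.submatrix id f).rank ≤ A.rank := by
  rw [← Matrix.rank_transpose (A.submatrix id f), ← Matrix.rank_transpose A,
    Matrix.transpose_submatrix]
  exact aux_rank_submatrix_row_le Aᵀ f

/-- If a symmetric matrix with zero diagonal over a field is singular, its rank equals the
maximum of the ranks of its co-order-one principal submatrices. -/
theorem stmt_7 {V : Type*} [Fintype V] [DecidableEq V] {K : Type*} [Field K]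
    (A : Matrix V V K) (hsymm : A.IsSymm) (hdiag : ∀ v : V, A v v = 0)
    (hcard : 2 ≤ Fintype.card V) (hdet : A.det = 0) :
    A.rank = Finset.univ.sup (fun v : V =>
      (A.submatrix (Subtype.val : {w : V // w ≠ v} → V)
        (Subtype.val : {w : V // w ≠ v} → V)).rank) := by
  -- rows are linearly dependent
  have hdep : ¬ LinearIndependent K (fun i => A i) := by
    change ¬ LinearIndependent K A.row
    rw [Matrix.linearIndependent_rows_iff_isUnit, Matrix.isUnit_iff_isUnit_det, hdet]
    simp
  rw [linearIndependent_iff_notMem_span] at hdep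
  push_neg at hdep
  obtain ⟨v, hv⟩ := hdep
  -- rewrite the span membership in terms of the subtype
  have hset : A '' (Set.univ \ {v}) = Set.range (fun w : {w : V // w ≠ v} => A ↑w) := by
    ext x
    simp only [Set.mem_image, Set.mem_diff, Set.mem_univ, Set.mem_singleton_iff, true_and,
      Set.mem_range, Subtype.exists]
    exact ⟨fun ⟨u, hu, he⟩ => ⟨u, by simpa using hu, he⟩, fun ⟨u, hu, he⟩ => ⟨u, by simpa using hu, he⟩⟩
  rw [hset] at hv
  have hrange : Set.range A = insert (A v) (Set.range (fun w : {w : V // w ≠ v} => A ↑w)) := by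
    ext x
    constructor
    · rintro ⟨u, rfl⟩
      by_cases hu : u = v
      · subst hu; exact Set.mem_insert _ _
      · exact Set.mem_insert_of_mem _ ⟨⟨u, hu⟩, rfl⟩
    · rintro (rfl | ⟨w, rfl⟩)
      · exact ⟨v, rfl⟩
      · exact ⟨↑w, rfl⟩
  -- C : delete row v only
  set C := A.submatrix (Subtype.val : {w : V // w ≠ v} → V) id with hC
  have hCA : C.rank = A.rank := by
    rw [Matrix.rank_eq_finrank_span_row, Matrix.rank_eq_finrank_span_row]
    have hspan : span K (Set.range C) = span K (Set.range A) := by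
      have h1 : Set.range C = Set.range (fun w : {w : V // w ≠ v} => A ↑w) := rfl
      rw [h1, ← Submodule.span_insert_eq_span hv, ← hrange]
    exact congrArg (fun S : Submodule K _ => Module.finrank K S) hspan
  -- B : delete row and column v
  set B := A.submatrix (Subtype.val : {w : V // w ≠ v} → V)
      (Subtype.val : {w : V // w ≠ v} → V) with hB
  have hAsymm : ∀ i j, A i j = A j i := fun i j => by
    conv_lhs => rw [← hsymm]
    rw [Matrix.transpose_apply]
  -- column v of C lies in the span of the other columns of C
  have hcol : Cᵀ v ∈ span K (Set.range Bᵀ) := by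
    have hπ : Cᵀ v = (LinearMap.funLeft K K (Subtype.val : {w : V // w ≠ v} → V)) (A v) := by
      funext w
      exact hAsymm (↑w) v
    rw [hπ]
    have := Submodule.mem_map_of_mem (f := LinearMap.funLeft K K
      (Subtype.val : {w : V // w ≠ v} → V)) hv
    rw [Submodule.map_span] at this
    refine Submodule.span_mono ?_ this
    rintro x ⟨y, ⟨w, rfl⟩, rfl⟩
    refine ⟨w, ?_⟩
    funext u
    show A ↑u ↑w = A ↑w ↑u
    exact hAsymm (↑u) (↑w)
  have hrangeC : Set.range Cᵀ = insert (Cᵀ v) (Set.range Bᵀ) := by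
    ext x
    constructor
    · rintro ⟨u, rfl⟩
      by_cases hu : u = v
      · subst hu; exact Set.mem_insert _ _
      · refine Set.mem_insert_of_mem _ ⟨⟨u, hu⟩, ?_⟩
        rfl
    · rintro (rfl | ⟨w, rfl⟩)
      · exact ⟨v, rfl⟩
      · exact ⟨↑w, rfl⟩
  have hBC : B.rank = C.rank := by
    rw [← Matrix.rank_transpose B, ← Matrix.rank_transpose C,
      Matrix.rank_eq_finrank_span_row, Matrix.rank_eq_finrank_span_row]
    have hspan : span K (Set.range Bᵀ) = span K (Set.range Cᵀ) := by
      rw [hrangeC, Submodule.span_insert_eq_span hcol]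
    exact congrArg (fun S : Submodule K _ => Module.finrank K S) hspan
  have hmain : B.rank = A.rank := hBC.trans hCA
  refine le_antisymm ?_ ?_
  · rw [← hmain, hB]
    exact Finset.le_sup (f := fun v : V =>
      (A.submatrix (Subtype.val : {w : V // w ≠ v} → V)
        (Subtype.val : {w : V // w ≠ v} → V)).rank) (Finset.mem_univ v)
  · apply Finset.sup_le
    intro w _
    calc (A.submatrix (Subtype.val : {u : V // u ≠ w} → V)
          (Subtype.val : {u : V // u ≠ w} → V)).rank
        = ((A.submatrix id (Subtype.val : {u : V // u ≠ w} → V)).submatrix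
            (Subtype.val : {u : V // u ≠ w} → V) id).rank := rfl
      _ ≤ (A.submatrix id (Subtype.val : {u : V // u ≠ w} → V)).rank :=
          aux_rank_submatrix_row_le _ _
      _ ≤ A.rank := aux_rank_submatrix_col_le A _
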